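/- Let X ∈ ℝ^{1,n-1} with ⟨X,X⟩ = 1. The affine isometries of Minkowski space ℝ^{1,n-1} that are involutions and fix setwise every spacelike affine hyperplane whose normal direction lies in the hyperplane X^⊥ (equivalently, fix pointwise the corresponding degenerate half-pipe hyperplane) are exactly the transformations (r_X, v) with v ∈ Span(X). In particular they form a one-parameter family. -/

import Mathlib

open scoped BigOperators

/-- The Minkowski bilinear form of signature `(1,n-1)` on `ℝ^{1,n-1} = ℝⁿ`. -/
noncomputable def mink (n : ℕ) (x y : Fin n → ℝ) : ℝ :=
  ∑ i : Fin n, (if (i : ℕ) = 0 then (-1 : ℝ) else 1) * x i * y i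

/-- The reflection in the Minkowski-orthogonal complement of a unit spacelike vector `X`. -/
noncomputable def mrefl (n : ℕ) (X v : Fin n → ℝ) : Fin n → ℝ :=
  v - (2 * mink n v X) • X

lemma mink_comm (n : ℕ) (x y : Fin n → ℝ) : mink n x y = mink n y x := by
  unfold mink; exact Finset.sum_congr rfl fun i _ => by ring

lemma mink_add_left (n : ℕ) (x y z : Fin n → ℝ) :
    mink n (x + y) z = mink n x z + mink n y z := by
  unfold mink; rw [← Finset.sum_add_distrib]
  exact Finset.sum_congr rfl fun i _ => by simp only [Pi.add_apply]; split <;> ring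

lemma mink_sub_left (n : ℕ) (x y z : Fin n → ℝ) :
    mink n (x - y) z = mink n x z - mink n y z := by
  unfold mink; rw [← Finset.sum_sub_distrib]
  exact Finset.sum_congr rfl fun i _ => by simp only [Pi.sub_apply]; split <;> ring

lemma mink_smul_left (n : ℕ) (c : ℝ) (x y : Fin n → ℝ) :
    mink n (c • x) y = c * mink n x y := by
  unfold mink; rw [Finset.mul_sum]
  exact Finset.sum_congr rfl fun i _ => by
    simp only [Pi.smul_apply, smul_eq_mul]; split <;> ring

lemma mink_add_right (n : ℕ) (x y z : Fin n → ℝ) :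
    mink n x (y + z) = mink n x y + mink n x z := by
  rw [mink_comm, mink_add_left, mink_comm n y, mink_comm n z]

lemma mink_sub_right (n : ℕ) (x y z : Fin n → ℝ) :
    mink n x (y - z) = mink n x y - mink n x z := by
  rw [mink_comm, mink_sub_left, mink_comm n y, mink_comm n z]

lemma mink_smul_right (n : ℕ) (c : ℝ) (x y : Fin n → ℝ) :
    mink n x (c • y) = c * mink n x y := by
  rw [mink_comm, mink_smul_left, mink_comm]

lemma mink_zero_left (n : ℕ) (y : Fin n → ℝ) : mink n 0 y = 0 := by simp [mink]

lemma mink_single_left (n : ℕ) (i : Fin n) (y : Fin n → ℝ) :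
    mink n (Pi.single i 1) y = (if (i : ℕ) = 0 then (-1 : ℝ) else 1) * y i := by
  unfold mink
  rw [Finset.sum_eq_single i]
  · simp
  · intro j _ hj; simp [Pi.single_apply, hj]
  · simp

lemma mink_nondeg (n : ℕ) (u : Fin n → ℝ) (h : ∀ z, mink n u z = 0) : u = 0 := by
  funext i
  have h1 := h (Pi.single i 1)
  rw [mink_comm, mink_single_left] at h1
  by_cases hi : (i : ℕ) = 0 <;> simp [hi] at h1 <;> simpa using h1

/-- For a unit spacelike vector `X`, an affine isometry `(A, a)` of Minkowski space is a
nontrivial involution fixing setwise every spacelike affine hyperplane whose (timelike)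
normal direction lies in `X^⊥` iff `A = r_X` and `a ∈ Span(X)`.  In particular such
transformations form the one-parameter family `{(r_X, v) : v ∈ Span(X)}`. -/
theorem stmt11 (n : ℕ) (hn : 2 ≤ n) (X : Fin n → ℝ) (hX : mink n X X = 1)
    (A : (Fin n → ℝ) →ₗ[ℝ] (Fin n → ℝ)) (a : Fin n → ℝ)
    (hA : ∀ x y, mink n (A x) (A y) = mink n x y) :
    ((∀ x, A (A x) = x) ∧ A a + a = 0 ∧ (∃ x, A x + a ≠ x) ∧
      (∀ H : Set (Fin n → ℝ),
        (∃ T x₀ : Fin n → ℝ, mink n T T < 0 ∧ mink n T X = 0 ∧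
          H = {x | mink n (x - x₀) T = 0}) →
        (fun x => A x + a) '' H = H)) ↔
      ((∀ x, A x = mrefl n X x) ∧ ∃ c : ℝ, a = c • X) := by
  have hXne : X ≠ 0 := by
    intro h; rw [h, mink_zero_left] at hX; norm_num at hX
  constructor
  · rintro ⟨hinv, ha, hnt, hfix⟩
    -- Step A : the translation at each basepoint is orthogonal to every timelike T ⊥ X
    have stepA : ∀ (x₀ T : Fin n → ℝ), mink n T T < 0 → mink n T X = 0 →
        mink n (A x₀ + a - x₀) T = 0 := by
      intro x₀ T hTT hTX
      have h1 := hfix {x | mink n (x - x₀) T = 0} ⟨T, x₀, hTT, hTX, rfl⟩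
      have hx₀ : x₀ ∈ {x | mink n (x - x₀) T = 0} := by
        simp [Set.mem_setOf_eq, sub_self, mink_zero_left]
      have hm : A x₀ + a ∈ {x | mink n (x - x₀) T = 0} :=
        h1 ▸ ⟨x₀, hx₀, rfl⟩
      exact hm
    -- the reference timelike vector T₀ ⊥ X
    set i0 : Fin n := ⟨0, by omega⟩ with hi0
    set s : ℝ := X i0 with hs
    set T₀ : Fin n → ℝ := Pi.single i0 1 + s • X with hT₀
    have he0X : mink n (Pi.single i0 1) X = -s := by
      rw [mink_single_left]; simp [hi0, hs]
    have he0e0 : mink n (Pi.single i0 1) (Pi.single i0 1) = -1 := by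
      rw [mink_single_left]; simp [hi0, Pi.single_apply]
    have hT₀X : mink n T₀ X = 0 := by
      rw [hT₀, mink_add_left, mink_smul_left, he0X, hX]; ring
    have hT₀T₀ : mink n T₀ T₀ = -1 - s ^ 2 := by
      rw [hT₀, mink_add_right, mink_add_left, mink_add_left, mink_smul_left,
        mink_smul_right, mink_smul_right, mink_smul_left, he0e0, he0X, hX,
        mink_comm n X (Pi.single i0 1), he0X]
      ring
    have hT₀neg : mink n T₀ T₀ < 0 := by rw [hT₀T₀]; nlinarith [sq_nonneg s]
    -- Step C : the translation is orthogonal to all of X^⊥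
    have stepC : ∀ (x₀ u : Fin n → ℝ), mink n u X = 0 →
        mink n (A x₀ + a - x₀) u = 0 := by
      intro x₀ u huX
      have hwT₀ : mink n (A x₀ + a - x₀) T₀ = 0 := stepA x₀ T₀ hT₀neg hT₀X
      set c1 : ℝ := mink n T₀ u with hc1
      set c2 : ℝ := mink n u u with hc2
      set q : ℝ := 2 * |c1| + |c2| + 1 with hq
      have hq0 : (0:ℝ) ≤ q := by
        have := abs_nonneg c1; have := abs_nonneg c2; linarith
      have hq1 : (1:ℝ) ≤ q := by
        have := abs_nonneg c1; have := abs_nonneg c2; linarith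
      have hTX : mink n (q • T₀ + u) X = 0 := by
        rw [mink_add_left, mink_smul_left, hT₀X, huX]; ring
      have hTT : mink n (q • T₀ + u) (q • T₀ + u) < 0 := by
        rw [mink_add_right, mink_add_left, mink_add_left, mink_smul_left,
          mink_smul_right, mink_smul_right, mink_smul_left, hT₀T₀,
          mink_comm n u T₀, ← hc1, ← hc2]
        have hqq : q * q = 2 * q * |c1| + q * |c2| + q := by rw [hq]; ring
        nlinarith [le_abs_self c1, le_abs_self c2, abs_nonneg c1, abs_nonneg c2,
          mul_le_mul_of_nonneg_left (le_abs_self c1) hq0,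
          mul_le_mul_of_nonneg_left (le_abs_self c2) hq0,
          sq_nonneg (q * s), sq_nonneg s, hq1, hqq]
      have h0 := stepA x₀ (q • T₀ + u) hTT hTX
      rw [mink_add_right, mink_smul_right, hwT₀] at h0
      simpa using h0
    -- Step D : A x₀ + a - x₀ ∈ Span X
    have stepD : ∀ x₀ : Fin n → ℝ,
        A x₀ + a - x₀ = (mink n (A x₀ + a - x₀) X) • X := by
      intro x₀
      set w : Fin n → ℝ := A x₀ + a - x₀ with hw
      set u : Fin n → ℝ := w - (mink n w X) • X with hu
      have huz : ∀ z, mink n u z = 0 := by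
        intro z
        set v : Fin n → ℝ := z - (mink n z X) • X with hv
        have hvX : mink n v X = 0 := by
          rw [hv, mink_sub_left, mink_smul_left, hX]; ring
        have hwv : mink n w v = 0 := stepC x₀ v hvX
        have huX : mink n u X = 0 := by
          rw [hu, mink_sub_left, mink_smul_left, hX]; ring
        have hXv : mink n X v = 0 := by rw [mink_comm]; exact hvX
        have hz : z = (mink n z X) • X + v := by rw [hv]; abel
        rw [hz, mink_add_right, mink_smul_right, huX, hu, mink_sub_left,
          mink_smul_left, hwv, hXv]
        ring
      have hu0 := mink_nondeg n u huz
      rw [hu, sub_eq_zero] at hu0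
      exact hu0
    have ha_span : a = (mink n a X) • X := by
      have hd := stepD 0
      simpa using hd
    -- A x - x ∈ Span X
    have key : ∀ x, A x - x = (mink n (A x - x) X) • X := by
      intro x
      have hd := stepD x
      have hsum : A x + a - x = (A x - x) + a := by abel
      rw [hsum, mink_add_left, add_smul] at hd
      rw [← ha_span] at hd
      exact add_right_cancel hd
    -- quadratic relation from isometry
    have quad : ∀ x, (mink n (A x - x) X) *
        ((mink n (A x - x) X) + 2 * mink n x X) = 0 := by
      intro x
      have hiso := hA x x
      have hAx : A x = x + (mink n (A x - x) X) • X := by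
        rw [← key x]; abel
      rw [hAx, mink_add_right, mink_add_left, mink_add_left, mink_smul_left,
        mink_smul_right, mink_smul_right, mink_smul_left, hX,
        mink_comm n X x] at hiso
      linear_combination hiso
    by_cases hall : ∀ x, mink n (A x - x) X = 0
    · exfalso
      have hid : ∀ x, A x = x := by
        intro x
        have hk := key x
        rw [hall x, zero_smul, sub_eq_zero] at hk
        exact hk
      have ha0 : a = 0 := by
        have h2 : (2:ℝ) • a = 0 := by rw [two_smul]; rw [hid a] at ha; exact ha
        rcases smul_eq_zero.mp h2 with h | h
        · norm_num at h
        · exact h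
      obtain ⟨x, hx⟩ := hnt
      exact hx (by rw [hid x, ha0, add_zero])
    · push_neg at hall
      obtain ⟨x₁, hx₁⟩ := hall
      have hL : ∀ x, mink n (A x - x) X + 2 * mink n x X = 0 := by
        intro x
        by_contra hLx
        have hL1 : mink n (A x₁ - x₁) X + 2 * mink n x₁ X = 0 := by
          rcases mul_eq_zero.mp (quad x₁) with h | h
          · exact absurd h hx₁
          · exact h
        have hν2 : mink n (A x - x) X = 0 := by
          rcases mul_eq_zero.mp (quad x) with h | h
          · exact h
          · exact absurd h hLx
        have h3 := quad (x₁ + x)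
        have hadd : A (x₁ + x) - (x₁ + x) = (A x₁ - x₁) + (A x - x) := by
          rw [map_add]; abel
        rw [hadd, mink_add_left, mink_add_left n x₁ x X] at h3
        rcases mul_eq_zero.mp h3 with h | h
        · exact hx₁ (by rw [hν2] at h; linarith)
        · exact hLx (by linarith)
      refine ⟨fun x => ?_, mink n a X, ha_span⟩
      have hAx : A x = x + (mink n (A x - x) X) • X := by
        rw [← key x]; abel
      have hν : mink n (A x - x) X = -(2 * mink n x X) := by
        have := hL x; linarith
      rw [hAx, hν, mrefl, neg_smul, ← sub_eq_add_neg]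
  · rintro ⟨hAr, c, rfl⟩
    have hinv' : ∀ x, A (A x) = x := by
      intro x
      rw [hAr, hAr]
      simp only [mrefl, mink_sub_left, mink_smul_left, hX, mul_one]
      have h1 : (2 * (mink n x X - 2 * mink n x X)) = -(2 * mink n x X) := by ring
      rw [h1, neg_smul, sub_neg_eq_add]
      abel
    have hAa : A (c • X) = -(c • X) := by
      rw [hAr]
      simp only [mrefl, mink_smul_left, hX, mul_one]
      have h2 : ((2:ℝ) * c) • X = c • X + c • X := by rw [two_mul, add_smul]
      rw [h2]; abel
    refine ⟨hinv', by rw [hAa]; abel, ?_, ?_⟩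
    · by_cases hc : c = 0
      · refine ⟨X, ?_⟩
        rw [hAr, hc, zero_smul, add_zero]
        simp only [mrefl, hX, mul_one]
        intro h
        apply hXne
        have h2 : (2:ℝ) • X = 0 := sub_eq_self.mp h
        rcases smul_eq_zero.mp h2 with h' | h'
        · norm_num at h'
        · exact h'
      · refine ⟨0, ?_⟩
        rw [map_zero, zero_add]
        intro h
        rcases smul_eq_zero.mp h with h' | h'
        · exact hc h'
        · exact hXne h'
    · rintro H ⟨T, x₀, hTT, hTX, rfl⟩
      have hXT : mink n X T = 0 := by rw [mink_comm]; exact hTX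
      have hmem : ∀ y, mink n (y - x₀) T = 0 →
          mink n ((A y + c • X) - x₀) T = 0 := by
        intro y hy
        rw [hAr]
        have hsplit : (mrefl n X y + c • X) - x₀
            = (y - x₀) + ((c - 2 * mink n y X) • X) := by
          simp only [mrefl, sub_smul]; abel
        rw [hsplit, mink_add_left, mink_smul_left, hXT, hy]
        ring
      have hff : ∀ y, A (A y + c • X) + c • X = y := by
        intro y
        rw [map_add, hinv' y, hAa]
        abel
      apply Set.Subset.antisymm
      · rintro _ ⟨y, hy, rfl⟩
        exact hmem y hy
      · intro y hy
        exact ⟨A y + c • X, hmem y hy, hff y⟩
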